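/- Let Γ be a nonempty closed subset of EuclideanSpace ℝ (Fin n), let d(x) = infDist(x, Γ), and let x ∉ Γ be a point at which d is differentiable. Then the closest point of Γ to x is unique: if y₁, y₂ ∈ Γ satisfy dist(x, y₁) = infDist(x, Γ) and dist(x, y₂) = infDist(x, Γ), then y₁ = y₂. -/

import Mathlib

set_option maxHeartbeats 1000000

/-- If the distance function to a nonempty closed set `Γ` is differentiable at `x ∉ Γ`,
then the closest point of `Γ` to `x` is unique. -/
theorem closest_point_unique_of_differentiable
    {n : ℕ} (Γ : Set (EuclideanSpace ℝ (Fin n))) (hne : Γ.Nonempty) (hcl : IsClosed Γ)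
    (x : EuclideanSpace ℝ (Fin n)) (hx : x ∉ Γ)
    (hd : DifferentiableAt ℝ (fun z => Metric.infDist z Γ) x)
    (y₁ y₂ : EuclideanSpace ℝ (Fin n)) (hy₁ : y₁ ∈ Γ) (hy₂ : y₂ ∈ Γ)
    (h₁ : dist x y₁ = Metric.infDist x Γ) (h₂ : dist x y₂ = Metric.infDist x Γ) :
    y₁ = y₂ := by
  set f : EuclideanSpace ℝ (Fin n) → ℝ := fun z => Metric.infDist z Γ with hf
  set d : ℝ := Metric.infDist x Γ with hdd
  have hd0 : 0 < d := by
    rcases lt_or_eq_of_le (Metric.infDist_nonneg (x := x) (s := Γ)) with h | h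
    · exact h
    · exact absurd ((hcl.mem_iff_infDist_zero hne).mpr h.symm) hx
  set L : EuclideanSpace ℝ (Fin n) →L[ℝ] ℝ := fderiv ℝ f x with hL
  -- key: for each closest point y, L (x - y) = d
  have key : ∀ y, y ∈ Γ → dist x y = d → L (x - y) = d := by
    intro y hy hdy
    set v : EuclideanSpace ℝ (Fin n) := y - x with hv
    have hvnorm : ‖v‖ = d := by
      rw [hv, ← hdy, dist_eq_norm, ← norm_neg]; congr 1; abel
    -- derivative of g t = f (x + t • v) at 0 is L v
    have hinner : HasDerivAt (fun t : ℝ => x + t • v) v 0 := by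
      simpa using ((hasDerivAt_id (0 : ℝ)).smul_const v).const_add x
    have hg : HasDerivAt (fun t : ℝ => f (x + t • v)) (L v) 0 := by
      have h := (show HasFDerivAt f L (x + (0:ℝ) • v) by simpa using hd.hasFDerivAt).comp_hasDerivAt
        0 hinner
      exact h
    have hslope : Filter.Tendsto (slope (fun t : ℝ => f (x + t • v)) 0)
        (nhdsWithin 0 (Set.Ioi 0)) (nhds (L v)) :=
      (hasDerivAt_iff_tendsto_slope.mp hg).mono_left
        (nhdsWithin_mono 0 (fun t ht => ne_of_gt ht))
    have heq : ∀ t ∈ Set.Ioo (0 : ℝ) 1, slope (fun t : ℝ => f (x + t • v)) 0 t = -d := by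
      intro t ht
      have hle : f (x + t • v) ≤ (1 - t) * d := by
        calc f (x + t • v) ≤ dist (x + t • v) y := Metric.infDist_le_dist_of_mem hy
          _ = ‖(1 - t) • (x - y)‖ := by
              rw [dist_eq_norm]; congr 1
              rw [hv]; module
          _ = (1 - t) * d := by
              rw [norm_smul, Real.norm_eq_abs, abs_of_pos (by linarith [ht.2]),
                show ‖x - y‖ = d by rw [← hdy, dist_eq_norm]]
      have hge : (1 - t) * d ≤ f (x + t • v) := by
        have := (Metric.lipschitz_infDist_pt Γ).dist_le_mul x (x + t • v)
        have hdist : dist x (x + t • v) = t * d := by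
          rw [dist_eq_norm, show x - (x + t • v) = (-t) • v by module, norm_smul,
            Real.norm_eq_abs, abs_neg, abs_of_pos ht.1, hvnorm]
        have habs : |f x - f (x + t • v)| ≤ t * d := by
          calc |f x - f (x + t • v)| = dist (f x) (f (x + t • v)) := by
                rw [Real.dist_eq]
            _ ≤ 1 * dist x (x + t • v) := this
            _ = t * d := by rw [one_mul, hdist]
        have hfx : f x = d := rfl
        nlinarith [abs_le.mp habs]
      have : f (x + t • v) = (1 - t) * d := le_antisymm hle hge
      have hg0 : f (x + (0:ℝ) • v) = d := by simp [hf, hdd]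
      rw [slope_def_field, this, hg0, sub_zero, div_eq_iff (ne_of_gt ht.1)]
      ring
    have hconst : Filter.Tendsto (slope (fun t : ℝ => f (x + t • v)) 0)
        (nhdsWithin 0 (Set.Ioi 0)) (nhds (-d)) := by
      refine Filter.Tendsto.congr' ?_ tendsto_const_nhds
      filter_upwards [Ioo_mem_nhdsGT_of_mem (by constructor <;> norm_num :
        (0:ℝ) ∈ Set.Ico 0 1)] with t ht
      exact (heq t ht).symm
    have hLv : L v = -d := tendsto_nhds_unique hslope hconst
    have : L (x - y) = - L v := by
      rw [← map_neg]; congr 1; rw [hv]; abel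
    rw [this, hLv, neg_neg]
  have hLnorm : ‖L‖ ≤ 1 := by
    have := norm_fderiv_le_of_lipschitz ℝ (Metric.lipschitz_infDist_pt Γ) (x₀ := x)
    simpa using this
  set v₁ : EuclideanSpace ℝ (Fin n) := x - y₁
  set v₂ : EuclideanSpace ℝ (Fin n) := x - y₂
  have hn₁ : ‖v₁‖ = d := by rw [← h₁, dist_eq_norm]
  have hn₂ : ‖v₂‖ = d := by rw [← h₂, dist_eq_norm]
  have hL₁ : L v₁ = d := key y₁ hy₁ h₁
  have hL₂ : L v₂ = d := key y₂ hy₂ h₂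
  have hsum : (2 : ℝ) * d ≤ ‖v₁ + v₂‖ := by
    have : L (v₁ + v₂) = 2 * d := by rw [map_add, hL₁, hL₂]; ring
    calc (2:ℝ) * d = L (v₁ + v₂) := this.symm
      _ ≤ ‖L (v₁ + v₂)‖ := le_abs_self _
      _ ≤ ‖L‖ * ‖v₁ + v₂‖ := L.le_opNorm _
      _ ≤ 1 * ‖v₁ + v₂‖ := by
          apply mul_le_mul_of_nonneg_right hLnorm (norm_nonneg _)
      _ = ‖v₁ + v₂‖ := one_mul _
  have hsum' : ‖v₁ + v₂‖ ≤ 2 * d := by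
    calc ‖v₁ + v₂‖ ≤ ‖v₁‖ + ‖v₂‖ := norm_add_le _ _
      _ = 2 * d := by rw [hn₁, hn₂]; ring
  have hnormadd : ‖v₁ + v₂‖ = 2 * d := le_antisymm hsum' hsum
  have hinner : (inner ℝ v₁ v₂ : ℝ) = ‖v₁‖ * ‖v₂‖ := by
    have hsq := norm_add_sq_real v₁ v₂
    rw [hnormadd, hn₁, hn₂] at hsq
    rw [hn₁, hn₂]
    nlinarith [hsq]
  have := (inner_eq_norm_mul_iff_real (x := v₁) (y := v₂)).mp hinner
  rw [hn₁, hn₂] at this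
  have hv : v₁ = v₂ := smul_right_injective _ (ne_of_gt hd0) this
  have hxy : x - y₁ = x - y₂ := hv
  exact sub_right_injective hxy
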